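/- Let ρ be a normalized proximate order function with limit ρ₀ > 0, φ the inverse of r ↦ r^{ρ(r)}, and let (a_ℓ) be a sequence of complex numbers and σ ≥ 0 with (1/ρ₀)·ln σ ≥ limsup_{ℓ→∞} ((1/ℓ)·ln|a_ℓ| + ln φ(ℓ)) − 1/ρ₀ − (ln ρ₀)/ρ₀ (where ln 0 = −∞). Then for every τ' > σ there exist N ∈ ℕ and C > 0 such that sup_{ℓ ≥ N} (ln|a_ℓ| + ℓ·ln r) ≤ τ'·r^{ρ(r)} + C for all r > 0. -/

import Mathlib

set_option maxHeartbeats 1000000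

open Filter Real

lemma opt_aux (la A lam x : ℝ) (hl : 0 < la) (hA : 0 < A) (hlam : 0 < lam) :
    la * x - A * Real.exp (lam * x) ≤ (la / lam) * (Real.log (la / (A * lam)) - 1) := by
  have hpos : 0 < la / (A * lam) := div_pos hl (mul_pos hA hlam)
  have h := Real.add_one_le_exp (lam * x - Real.log (la / (A * lam)))
  rw [Real.exp_sub, Real.exp_log hpos] at h
  have h2 := mul_le_mul_of_nonneg_right h (le_of_lt (div_pos hl hlam))
  have e : Real.exp (lam * x) / (la / (A * lam)) * (la / lam) = A * Real.exp (lam * x) := by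
    field_simp
  rw [e] at h2
  have e2 : (lam * x - Real.log (la / (A * lam)) + 1) * (la / lam)
      = la * x - (la / lam) * (Real.log (la / (A * lam)) - 1) := by
    field_simp; ring
  rw [e2] at h2
  linarith

lemma aux_main (ρ : ℝ → ℝ) (ρ₀ : ℝ) (hρ₀ : 0 < ρ₀)
    (hdiff : Differentiable ℝ ρ)
    (hlim : Filter.Tendsto ρ Filter.atTop (nhds ρ₀))
    (hder : Filter.Tendsto (fun r => deriv ρ r * r * Real.log r) Filter.atTop (nhds 0))
    (hmono : StrictMonoOn (fun r => r ^ ρ r) (Set.Ioi (0:ℝ)))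
    (φ : ℝ → ℝ) (hφpos : ∀ t, 0 < t → 0 < φ t)
    (hφp : ∀ t, 0 < t → (φ t) ^ ρ (φ t) = t)
    (a : ℕ → ℂ) (σ τ' : ℝ) (hσ : 0 < σ) (hτ : σ < τ')
    (hyp : ∀ δ : ℝ, 0 < δ → ∀ᶠ ℓ : ℕ in Filter.atTop, a ℓ ≠ 0 →
      (1 / (ℓ : ℝ)) * Real.log (‖a ℓ‖) + Real.log (φ (ℓ : ℝ))
        ≤ (Real.log σ + 1 + Real.log ρ₀) / ρ₀ + δ) :
    ∃ (N : ℕ) (C : ℝ), 0 < C ∧ ∀ r > (0:ℝ), ∀ ℓ : ℕ, N ≤ ℓ → a ℓ ≠ 0 →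
      Real.log (‖a ℓ‖) + (ℓ : ℝ) * Real.log r ≤ τ' * r ^ ρ r + C := by
  have hτ'pos : 0 < τ' := hσ.trans hτ
  set b : ℝ := (Real.log σ + 1 + Real.log ρ₀) / ρ₀ with hb_def
  set g : ℝ := (Real.log τ' - Real.log σ) / ρ₀ with hg_def
  have hg : 0 < g := div_pos (sub_pos.2 (Real.log_lt_log hσ hτ)) hρ₀
  set δ : ℝ := min 1 (g / 2) with hδ_def
  have hδ : 0 < δ := lt_min one_pos (by linarith)
  have hδ1 : δ ≤ 1 := min_le_left _ _
  have hδg : δ ≤ g / 2 := min_le_right _ _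
  set q : ℝ := max b 0 + 1 with hq_def
  have hq : 0 < q := by positivity
  have hqb : b + δ ≤ q := by
    have : b ≤ max b 0 := le_max_left _ _
    linarith
  -- choose ε
  set F : ℝ → ℝ := fun ε => b + δ + ((ρ₀ + ε) / (ρ₀ - ε) - 1) * q
      - (1 + Real.log τ' + Real.log (ρ₀ - ε)) / (ρ₀ - ε) with hF_def
  have hF0 : F 0 < 0 := by
    have : F 0 = δ - g := by
      simp only [hF_def, hg_def, hb_def]
      have hρ₀ne : ρ₀ ≠ 0 := hρ₀.ne'
      field_simp
      ring
    rw [this]; linarith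
  have hFc : ContinuousAt F 0 := by
    have h1 : ContinuousAt (fun ε : ℝ => ρ₀ - ε) 0 := by fun_prop
    have hne : ((fun ε : ℝ => ρ₀ - ε) 0) ≠ 0 := by simpa using hρ₀.ne'
    have h2 : ContinuousAt (fun ε : ℝ => Real.log (ρ₀ - ε)) 0 :=
      (Real.continuousAt_log hne).comp h1
    apply ContinuousAt.sub
    · apply ContinuousAt.add continuousAt_const
      apply ContinuousAt.mul _ continuousAt_const
      apply ContinuousAt.sub _ continuousAt_const
      exact ContinuousAt.div (by fun_prop) h1 hne
    · exact ContinuousAt.div (continuousAt_const.add h2) h1 hne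
  obtain ⟨ε, ⟨hFε, hερ⟩, hε0⟩ :
      ∃ ε : ℝ, (F ε < 0 ∧ ε < ρ₀) ∧ ε ∈ Set.Ioi (0:ℝ) := by
    have ev1 : ∀ᶠ ε in nhds (0:ℝ), F ε < 0 := hFc (Iio_mem_nhds hF0)
    have ev2 : ∀ᶠ ε in nhds (0:ℝ), ε < ρ₀ := Iio_mem_nhds hρ₀
    exact ((((ev1.and ev2)).filter_mono nhdsWithin_le_nhds).and
      eventually_mem_nhdsWithin).exists
  rw [Set.mem_Ioi] at hε0
  set lam : ℝ := ρ₀ - ε with hlam_def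
  set mu : ℝ := ρ₀ + ε with hmu_def
  have hlam : 0 < lam := by simp only [hlam_def]; linarith
  have hmu : 0 < mu := by simp only [hmu_def]; linarith
  set c : ℝ := Real.exp (-(mu * q)) with hc_def
  have hc : 0 < c := Real.exp_pos _
  have hlogc : Real.log c = -(mu * q) := Real.log_exp _
  have hc1 : c ≤ 1 := by
    rw [hc_def]
    exact le_of_lt (Real.exp_lt_one_iff.2 (by nlinarith))
  -- threshold u₀ for the logarithmic derivative
  have hG : Filter.Tendsto (fun u => deriv ρ (Real.exp u) * Real.exp u * Real.log (Real.exp u)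
      + ρ (Real.exp u)) Filter.atTop (nhds (0 + ρ₀)) :=
    ((hder.add hlim)).comp Real.tendsto_exp_atTop
  rw [zero_add] at hG
  have hG2 : ∀ᶠ u in Filter.atTop, |(deriv ρ (Real.exp u) * Real.exp u * Real.log (Real.exp u)
      + ρ (Real.exp u)) - ρ₀| < ε := by
    have := Metric.tendsto_nhds.mp hG ε hε0
    simpa [Real.dist_eq] using this
  obtain ⟨u₀, hu₀⟩ := Filter.eventually_atTop.mp hG2
  set L : ℝ → ℝ := fun u => ρ (Real.exp u) * u with hL_def
  have HL : ∀ u : ℝ, HasDerivAt L (deriv ρ (Real.exp u) * Real.exp u * u + ρ (Real.exp u)) u := by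
    intro u
    have h1 : HasDerivAt (fun u : ℝ => ρ (Real.exp u)) (deriv ρ (Real.exp u) * Real.exp u) u :=
      ((hdiff (Real.exp u)).hasDerivAt).comp u (Real.hasDerivAt_exp u)
    have h2 := h1.mul (hasDerivAt_id u)
    simpa [hL_def, mul_comm, mul_assoc, mul_left_comm, Pi.mul_def] using h2
  have hDbound : ∀ u, u₀ ≤ u → lam ≤ deriv ρ (Real.exp u) * Real.exp u * u + ρ (Real.exp u) ∧
      deriv ρ (Real.exp u) * Real.exp u * u + ρ (Real.exp u) ≤ mu := by
    intro u hu
    have := hu₀ u hu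
    rw [Real.log_exp] at this
    rw [abs_sub_lt_iff] at this
    constructor <;> [skip; skip] <;> simp only [hlam_def, hmu_def] <;> linarith [this.1, this.2]
  have m1 : MonotoneOn (fun u => L u - lam * u) (Set.Ici u₀) := by
    apply monotoneOn_of_deriv_nonneg (convex_Ici u₀)
    · apply Continuous.continuousOn
      have : Continuous L := by
        apply Continuous.mul _ continuous_id
        exact hdiff.continuous.comp Real.continuous_exp
      fun_prop
    · intro u hu
      exact ((HL u).sub ((hasDerivAt_id u).const_mul lam)).differentiableAt.differentiableWithinAt
    · intro u hu
      rw [interior_Ici] at hu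
      have hd : deriv (fun u => L u - lam * u) u
          = deriv ρ (Real.exp u) * Real.exp u * u + ρ (Real.exp u) - lam := by
        have := (HL u).sub ((hasDerivAt_id u).const_mul lam)
        simpa [Pi.sub_def] using this.deriv
      rw [hd]
      have := (hDbound u (le_of_lt hu)).1
      linarith
  have m2 : MonotoneOn (fun u => mu * u - L u) (Set.Ici u₀) := by
    apply monotoneOn_of_deriv_nonneg (convex_Ici u₀)
    · apply Continuous.continuousOn
      have : Continuous L := by
        apply Continuous.mul _ continuous_id
        exact hdiff.continuous.comp Real.continuous_exp
      fun_prop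
    · intro u hu
      exact (((hasDerivAt_id u).const_mul mu).sub (HL u)).differentiableAt.differentiableWithinAt
    · intro u hu
      rw [interior_Ici] at hu
      have hd : deriv (fun u => mu * u - L u) u
          = mu - (deriv ρ (Real.exp u) * Real.exp u * u + ρ (Real.exp u)) := by
        have := ((hasDerivAt_id u).const_mul mu).sub (HL u)
        simpa [Pi.sub_def] using this.deriv
      rw [hd]
      have := (hDbound u (le_of_lt hu)).2
      linarith
  have ineq_low : ∀ v u : ℝ, u₀ ≤ v → v ≤ u → lam * (u - v) ≤ L u - L v := by
    intro v u hv hvu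
    have := m1 (Set.mem_Ici.2 hv) (Set.mem_Ici.2 (hv.trans hvu)) hvu
    simp only at this
    nlinarith
  have ineq_up : ∀ v u : ℝ, u₀ ≤ v → v ≤ u → L u - L v ≤ mu * (u - v) := by
    intro v u hv hvu
    have := m2 (Set.mem_Ici.2 hv) (Set.mem_Ici.2 (hv.trans hvu)) hvu
    simp only at this
    nlinarith
  set R₀ : ℝ := Real.exp u₀ with hR₀_def
  have hR₀ : 0 < R₀ := Real.exp_pos _
  set t₀ : ℝ := Real.exp (L u₀) with ht₀_def
  have ht₀ : 0 < t₀ := Real.exp_pos _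
  have hVR₀ : R₀ ^ ρ R₀ = t₀ := by
    rw [Real.rpow_def_of_pos hR₀, ht₀_def, hR₀_def, Real.log_exp, hL_def]
    ring_nf
  -- basic φ facts
  have hφmono : ∀ s t : ℝ, 0 < s → s ≤ t → φ s ≤ φ t := by
    intro s t hs hst
    by_contra h
    push_neg at h
    have ht : 0 < t := hs.trans_le hst
    have := hmono (Set.mem_Ioi.2 (hφpos t ht)) (Set.mem_Ioi.2 (hφpos s hs)) h
    simp only [hφp t ht, hφp s hs] at this
    linarith
  have hφge : ∀ t : ℝ, t₀ ≤ t → R₀ ≤ φ t := by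
    intro t ht
    by_contra h
    push_neg at h
    have htpos : 0 < t := ht₀.trans_le ht
    have := hmono (Set.mem_Ioi.2 (hφpos t htpos)) (Set.mem_Ioi.2 hR₀) h
    simp only [hφp t htpos, hVR₀] at this
    linarith
  -- log of V ∘ φ
  have hlogVφ : ∀ t : ℝ, 0 < t → ρ (φ t) * Real.log (φ t) = Real.log t := by
    intro t ht
    have h0 := hφp t ht
    rw [Real.rpow_def_of_pos (hφpos t ht)] at h0
    have h2 := congrArg Real.log h0
    rw [Real.log_exp] at h2
    rw [← h2]; ring
  have hLφ : ∀ t : ℝ, 0 < t → L (Real.log (φ t)) = Real.log t := by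
    intro t ht
    simp only [hL_def]
    rw [Real.exp_log (hφpos t ht)]
    exact hlogVφ t ht
  have hlogφge : ∀ t : ℝ, t₀ ≤ t → u₀ ≤ Real.log (φ t) := by
    intro t ht
    have := hφge t ht
    calc u₀ = Real.log R₀ := by rw [hR₀_def, Real.log_exp]
    _ ≤ Real.log (φ t) := Real.log_le_log hR₀ this
  -- the two-sided comparison for φ
  have hφcomp : ∀ s t : ℝ, t₀ ≤ s → s ≤ t →
      Real.log t - Real.log s ≤ mu * (Real.log (φ t) - Real.log (φ s)) := by
    intro s t hs hst
    have hspos : 0 < s := ht₀.trans_le hs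
    have htpos : 0 < t := hspos.trans_le hst
    have h1 : Real.log (φ s) ≤ Real.log (φ t) :=
      Real.log_le_log (hφpos s hspos) (hφmono s t hspos hst)
    have := ineq_up (Real.log (φ s)) (Real.log (φ t)) (hlogφge s hs) h1
    rw [hLφ s hspos, hLφ t htpos] at this
    linarith
  -- eventual bound on coefficients
  obtain ⟨N₁, hN₁⟩ := Filter.eventually_atTop.mp (hyp δ hδ)
  refine ⟨max N₁ (⌈t₀ / c⌉₊ + 1), 1, one_pos, ?_⟩
  intro r hr ℓ hℓ ha
  have hℓ1 : 1 ≤ ℓ := le_trans (le_trans (Nat.le_add_left 1 _) (le_max_right _ _)) hℓ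
  have hℓR : (0:ℝ) < (ℓ:ℝ) := by exact_mod_cast hℓ1
  have hcl : t₀ ≤ c * ℓ := by
    have h1 : (⌈t₀ / c⌉₊ : ℝ) ≤ (ℓ : ℝ) := by
      exact_mod_cast le_trans (Nat.le_succ _) (le_trans (le_max_right N₁ _) hℓ)
    have h2 : t₀ / c ≤ (ℓ : ℝ) := le_trans (Nat.le_ceil _) h1
    rw [div_le_iff₀ hc] at h2
    linarith [h2]
  have hbound := hN₁ ℓ (le_trans (le_max_left _ _) hℓ) ha
  have habs : Real.log (‖a ℓ‖) ≤ (ℓ:ℝ) * (b + δ - Real.log (φ (ℓ:ℝ))) := by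
    have h1 : (1 / (ℓ:ℝ)) * Real.log (‖a ℓ‖) ≤ b + δ - Real.log (φ (ℓ:ℝ)) := by
      linarith
    have h2 := mul_le_mul_of_nonneg_left h1 (le_of_lt hℓR)
    have h3 : (ℓ:ℝ) * ((1 / (ℓ:ℝ)) * Real.log (‖a ℓ‖))
        = Real.log (‖a ℓ‖) := by
      field_simp
    linarith [h2, h3.symm.le]
  set s : ℝ := c * ℓ with hs_def
  have hspos : 0 < s := mul_pos hc hℓR
  have hst₀ : t₀ ≤ s := hcl
  set R : ℝ := φ s with hR_def
  have hRpos : 0 < R := hφpos s hspos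
  have hRR₀ : R₀ ≤ R := hφge s hst₀
  have hsl : s ≤ (ℓ:ℝ) := by
    calc s = c * ℓ := rfl
    _ ≤ 1 * ℓ := mul_le_mul_of_nonneg_right hc1 (le_of_lt hℓR)
    _ = ℓ := one_mul _
  have hqineq : q ≤ Real.log (φ (ℓ:ℝ)) - Real.log R := by
    have h1 := hφcomp s (ℓ:ℝ) hst₀ hsl
    have h2 : Real.log (ℓ:ℝ) - Real.log s = mu * q := by
      rw [hs_def, Real.log_mul (ne_of_gt hc) (ne_of_gt hℓR), hlogc]
      ring
    rw [h2] at h1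
    have := (mul_le_mul_iff_right₀ hmu).mp h1
    exact this
  -- now the case split
  rcases lt_or_ge r R with hcase | hcase
  · -- small r
    have hV : 0 ≤ τ' * r ^ ρ r :=
      mul_nonneg (le_of_lt hτ'pos) (le_of_lt (Real.rpow_pos_of_pos hr _))
    have hlogr : Real.log r ≤ Real.log R := Real.log_le_log hr (le_of_lt hcase)
    have h1 : (ℓ:ℝ) * Real.log r ≤ (ℓ:ℝ) * (Real.log (φ (ℓ:ℝ)) - q) :=
      mul_le_mul_of_nonneg_left (by linarith) (le_of_lt hℓR)
    have e : (ℓ:ℝ) * (b + δ - Real.log (φ (ℓ:ℝ))) + (ℓ:ℝ) * (Real.log (φ (ℓ:ℝ)) - q)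
        = (ℓ:ℝ) * (b + δ - q) := by ring
    have h2 : Real.log (‖a ℓ‖) + (ℓ:ℝ) * Real.log r ≤ (ℓ:ℝ) * (b + δ - q) := by
      linarith
    have h3 : (ℓ:ℝ) * (b + δ - q) ≤ 0 :=
      mul_nonpos_of_nonneg_of_nonpos (le_of_lt hℓR) (by linarith)
    linarith
  · -- large r
    set x : ℝ := Real.log r - Real.log R with hx_def
    have hlogrR : Real.log R ≤ Real.log r := Real.log_le_log hRpos hcase
    have hx : 0 ≤ x := by simp only [hx_def]; linarith
    have h_u₀R : u₀ ≤ Real.log R := hlogφge s hst₀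
    have hlow := ineq_low (Real.log R) (Real.log r) h_u₀R hlogrR
    have hLr : L (Real.log r) = ρ r * Real.log r := by
      simp only [hL_def, Real.exp_log hr]
    have hLR : L (Real.log R) = Real.log s := hLφ s hspos
    rw [hLr, hLR] at hlow
    have hVlow : s * Real.exp (lam * x) ≤ r ^ ρ r := by
      rw [Real.rpow_def_of_pos hr]
      have h1 : Real.log s + lam * x ≤ Real.log r * ρ r := by
        simp only [hx_def]
        linarith [hlow]
      calc s * Real.exp (lam * x) = Real.exp (Real.log s + lam * x) := by
            rw [Real.exp_add, Real.exp_log hspos]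
      _ ≤ Real.exp (Real.log r * ρ r) := Real.exp_le_exp.2 h1
    have hopt := opt_aux (ℓ:ℝ) (τ' * s) lam x hℓR (mul_pos hτ'pos hspos) hlam
    have hlog : Real.log ((ℓ:ℝ) / (τ' * s * lam))
        = mu * q - Real.log τ' - Real.log lam := by
      have e : (ℓ:ℝ) / (τ' * s * lam) = (τ' * c * lam)⁻¹ := by
        rw [hs_def]
        field_simp
      rw [e, Real.log_inv, Real.log_mul (by positivity) (ne_of_gt hlam),
        Real.log_mul (ne_of_gt hτ'pos) (ne_of_gt hc), hlogc]
      ring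
    rw [hlog] at hopt
    have hτV : τ' * (s * Real.exp (lam * x)) ≤ τ' * r ^ ρ r :=
      mul_le_mul_of_nonneg_left hVlow (le_of_lt hτ'pos)
    have hqℓ : (ℓ:ℝ) * Real.log R ≤ (ℓ:ℝ) * (Real.log (φ (ℓ:ℝ)) - q) :=
      mul_le_mul_of_nonneg_left (by linarith) (le_of_lt hℓR)
    have hlamne : ρ₀ - ε ≠ 0 := ne_of_gt hlam
    have e2 : (ℓ:ℝ) * (b + δ - Real.log (φ (ℓ:ℝ))) + (ℓ:ℝ) * (Real.log (φ (ℓ:ℝ)) - q)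
        + ((ℓ:ℝ) / lam) * (mu * q - Real.log τ' - Real.log lam - 1) = (ℓ:ℝ) * F ε := by
      simp only [hF_def, hlam_def, hmu_def]
      field_simp
      ring
    have hFneg : (ℓ:ℝ) * F ε ≤ 0 :=
      mul_nonpos_of_nonneg_of_nonpos (le_of_lt hℓR) (le_of_lt hFε)
    have hsplit : (ℓ:ℝ) * Real.log r = (ℓ:ℝ) * Real.log R + (ℓ:ℝ) * x := by
      simp only [hx_def]; ring
    have e3 : (ℓ:ℝ) * (b + δ - Real.log (φ (ℓ:ℝ))) + (ℓ:ℝ) * (Real.log (φ (ℓ:ℝ)) - q)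
        + ((ℓ:ℝ) / lam) * (mu * q - Real.log τ' - Real.log lam - 1) ≤ 0 := by
      rw [e2]; exact hFneg
    clear_value x R s c q lam mu F δ b g
    linarith only [habs, hopt, hτV, hqℓ, e3, hsplit]

theorem stmt_12 (ρ : ℝ → ℝ) (ρ₀ : ℝ) (hρ₀ : 0 < ρ₀)
    (hdiff : Differentiable ℝ ρ)
    (hpos : ∀ r, 0 ≤ r → 0 ≤ ρ r)
    (hlim : Filter.Tendsto ρ Filter.atTop (nhds ρ₀))
    (hder : Filter.Tendsto (fun r => deriv ρ r * r * Real.log r) Filter.atTop (nhds 0))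
    (hmono : StrictMonoOn (fun r => r ^ ρ r) (Set.Ioi (0:ℝ)))
    (hzero : Filter.Tendsto (fun r => r ^ ρ r) (nhdsWithin 0 (Set.Ioi 0)) (nhds 0))
    (φ : ℝ → ℝ) (hφpos : ∀ t, 0 < t → 0 < φ t)
    (hφ : ∀ r, 0 < r → φ (r ^ ρ r) = r)
    (hφp : ∀ t, 0 < t → (φ t) ^ ρ (φ t) = t)
    (a : ℕ → ℂ) (σ : ℝ) (hσ : 0 ≤ σ)
    (hyp : Filter.limsup (fun ℓ : ℕ =>
        if a ℓ = 0 then (⊥ : EReal)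
        else (((1 / (ℓ : ℝ)) * Real.log (‖a ℓ‖) + Real.log (φ (ℓ : ℝ)) : ℝ) : EReal))
        Filter.atTop ≤
      (if σ = 0 then (⊥ : EReal) else (((1 / ρ₀) * Real.log σ : ℝ) : EReal))
        + ((1 / ρ₀ : ℝ) : EReal) + ((Real.log ρ₀ / ρ₀ : ℝ) : EReal)) :
    ∀ τ' > σ, ∃ (N : ℕ) (C : ℝ), 0 < C ∧ ∀ r > (0:ℝ), ∀ ℓ : ℕ, N ≤ ℓ → a ℓ ≠ 0 →
      Real.log (‖a ℓ‖) + (ℓ : ℝ) * Real.log r ≤ τ' * r ^ ρ r + C := by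
  intro τ' hτ'
  set f : ℕ → EReal := fun ℓ : ℕ =>
      if a ℓ = 0 then (⊥ : EReal)
      else (((1 / (ℓ : ℝ)) * Real.log (‖a ℓ‖) + Real.log (φ (ℓ : ℝ)) : ℝ) : EReal)
    with hf_def
  set σ' : ℝ := if σ = 0 then τ' / 2 else σ with hσ'_def
  have hσ'pos : 0 < σ' := by
    rw [hσ'_def]
    split_ifs with h
    · linarith [h ▸ hτ']
    · exact lt_of_le_of_ne hσ (Ne.symm h)
  have hσ'τ : σ' < τ' := by
    rw [hσ'_def]
    split_ifs with h
    · linarith [h ▸ hτ']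
    · exact hτ'
  have hls : Filter.limsup f Filter.atTop ≤ (((Real.log σ' + 1 + Real.log ρ₀) / ρ₀ : ℝ) : EReal) := by
    by_cases h : σ = 0
    · rw [if_pos h, EReal.bot_add, EReal.bot_add] at hyp
      exact le_trans hyp bot_le
    · rw [if_neg h, ← EReal.coe_add, ← EReal.coe_add] at hyp
      refine le_trans hyp (EReal.coe_le_coe_iff.2 (le_of_eq ?_))
      rw [hσ'_def, if_neg h]
      field_simp
  have hev : ∀ δ : ℝ, 0 < δ → ∀ᶠ ℓ : ℕ in Filter.atTop, a ℓ ≠ 0 →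
      (1 / (ℓ : ℝ)) * Real.log (‖a ℓ‖) + Real.log (φ (ℓ : ℝ))
        ≤ (Real.log σ' + 1 + Real.log ρ₀) / ρ₀ + δ := by
    intro δ hδ
    have hlt : Filter.limsup f Filter.atTop
        < (((Real.log σ' + 1 + Real.log ρ₀) / ρ₀ + δ : ℝ) : EReal) :=
      lt_of_le_of_lt hls (EReal.coe_lt_coe_iff.2 (by linarith))
    filter_upwards [Filter.eventually_lt_of_limsup_lt hlt] with ℓ h hne
    rw [hf_def] at h
    simp only [if_neg hne] at h
    exact le_of_lt (EReal.coe_lt_coe_iff.1 h)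
  exact aux_main ρ ρ₀ hρ₀ hdiff hlim hder hmono φ hφpos hφp a σ' τ' hσ'pos hσ'τ hev
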